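/- Let A be a complete abelian category and G : FinSet* → A a polynomial functor of degree ≤ n for some n (i.e., Prim(G)(I) = 0 whenever |I| > n). Then the natural map from the limit of G ∘ ι over the category of nonempty finite sets with surjections to G({*}) is an isomorphism, where ι(I) = {*} ⊔ I. -/

import Mathlib

open CategoryTheory Limits

universe v u

/-- Skeleton of the category `FinSet*` of pointed finite sets: the object `⟨m⟩`
represents `{*} ⊔ Fin m`, and morphisms are pointed maps, encoded as partially
defined maps (`none` = basepoint). -/
structure PtdFin : Type where
  n : ℕ

instance : Category.{0} PtdFin where
  Hom X Y := Fin X.n → Option (Fin Y.n)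
  id X := some
  comp f g := fun i => (f i).bind g
  id_comp f := rfl
  comp_id f := by
    funext i; show (f i).bind some = f i; cases f i <;> rfl
  assoc f g h := by
    funext i
    show ((f i).bind g).bind h = (f i).bind fun j => (g j).bind h
    cases f i <;> rfl

/-- Skeleton of the category `FinSetSurj_ne` of nonempty finite sets with surjections:
the object `⟨m⟩` represents `Fin (m+1)`. -/
structure SurjFin : Type where
  n : ℕ

instance : Category.{0} SurjFin where
  Hom X Y := {f : Fin (X.n + 1) → Fin (Y.n + 1) // Function.Surjective f}
  id X := ⟨id, Function.surjective_id⟩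
  comp f g := ⟨g.1 ∘ f.1, g.2.comp f.2⟩

/-- The functor `ι : FinSetSurj_ne → FinSet*`, `I ↦ {*} ⊔ I`. -/
def iotaSurj : SurjFin ⥤ PtdFin where
  obj X := ⟨X.n + 1⟩
  map f := fun i => some (f.1 i)
  map_id X := rfl
  map_comp f g := rfl

/-- The pointed map `ψ_{I∖{i},I} : {*} ⊔ I → {*} ⊔ (I∖{i})`, identity away from `i`
and collapsing `i` to the basepoint. -/
def psiDel {m : ℕ} (i : Fin (m + 1)) : (⟨m + 1⟩ : PtdFin) ⟶ ⟨m⟩ :=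
  ⇑(finSuccEquiv' i)

/-- `G : FinSet* → A` is polynomial of degree `≤ n`:
`∩_{i ∈ I} ker G(ψ_{I∖{i},I}) = 0` for every finite set `I` with `|I| > n`. -/
noncomputable def IsPolyDegLE {A : Type u} [Category.{v} A] [Abelian A]
    (n : ℕ) (G : PtdFin ⥤ A) : Prop :=
  ∀ m : ℕ, n < m + 1 →
    (Finset.univ.inf fun i : Fin (m + 1) =>
      kernelSubobject (G.map (psiDel i))) = ⊥

/-! ### Auxiliary material -/

namespace PolyAux

lemma ptd_comp {X Y Z : PtdFin} (f : X ⟶ Y) (g : Y ⟶ Z) :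
    f ≫ g = fun i => (f i).bind g := rfl

/-- `ι̂ q`, the total pointed map induced by `q`. -/
def ihat {a b : ℕ} (q : Fin a → Fin b) : (⟨a⟩ : PtdFin) ⟶ ⟨b⟩ := fun i => some (q i)

/-- the idempotent associated to a subset `T`. -/
def eT {a : ℕ} (T : Finset (Fin a)) : (⟨a⟩ : PtdFin) ⟶ ⟨a⟩ :=
  fun i => if i ∈ T then some i else none

/-- the everywhere-undefined pointed map -/
def allNone (a b : ℕ) : (⟨a⟩ : PtdFin) ⟶ ⟨b⟩ := fun _ => none

lemma eT_univ (a : ℕ) : eT (Finset.univ : Finset (Fin a)) = 𝟙 (⟨a⟩ : PtdFin) := by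
  funext i
  simp [eT]
  rfl

/-- the canonical partial injection with image `S` and one undefined point -/
def gS {m : ℕ} (S : Finset (Fin (m + 1))) : (⟨S.card + 1⟩ : PtdFin) ⟶ ⟨m + 1⟩ :=
  fun i => if h : (i : ℕ) < S.card then some ((S.orderIsoOfFin rfl ⟨(i : ℕ), h⟩ : {x // x ∈ S}) : Fin (m + 1)) else none

/-- The image of a partial map, as a finset. -/
def img {a b : ℕ} (g : (⟨a⟩ : PtdFin) ⟶ (⟨b⟩ : PtdFin)) : Finset (Fin b) :=
  Finset.univ.filter fun s => ∃ j, g j = some s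

lemma mem_img {a b : ℕ} (g : (⟨a⟩ : PtdFin) ⟶ (⟨b⟩ : PtdFin)) (s : Fin b) :
    s ∈ img g ↔ ∃ j, g j = some s := by simp [img]

section Sums

variable {α β : Type*} {M : Type*} [DecidableEq α] [DecidableEq β] [AddCommGroup M]

lemma pair_sum (g : Finset β → M) (B : Finset β) (b : β) (hb : b ∈ B) :
    ∑ S ∈ B.powerset, (-1 : ℤ) ^ S.card • g (insert b S) = 0 := by
  rw [← Finset.insert_erase hb,
    Finset.sum_powerset_insert (Finset.notMem_erase b B)]
  rw [← Finset.sum_add_distrib]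
  refine Finset.sum_eq_zero fun S hS => ?_
  have hbS : b ∉ S := fun h =>
    Finset.notMem_erase b B (Finset.mem_powerset.mp hS h)
  rw [Finset.insert_idem, Finset.card_insert_of_notMem hbS, pow_succ, mul_comm, mul_smul,
    neg_one_smul]
  exact add_neg_cancel _

lemma sum_image_powerset (f : α → β) (g : Finset β → M) (A : Finset α) :
    ∑ T ∈ A.powerset, (-1 : ℤ) ^ T.card • g (T.image f)
      = ∑ S ∈ (A.image f).powerset, (-1 : ℤ) ^ S.card • g S := by
  induction A using Finset.induction_on generalizing g with
  | empty => simp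
  | @insert a A ha ih =>
    rw [Finset.sum_powerset_insert ha]
    have hcard : ∀ T ∈ A.powerset, ((insert a T).card = T.card + 1) := by
      intro T hT
      exact Finset.card_insert_of_notMem fun h => ha (Finset.mem_powerset.mp hT h)
    have h2 : ∑ T ∈ A.powerset, (-1 : ℤ) ^ (insert a T).card • g ((insert a T).image f)
        = - ∑ T ∈ A.powerset, (-1 : ℤ) ^ T.card • g (insert (f a) (T.image f)) := by
      rw [← Finset.sum_neg_distrib]
      refine Finset.sum_congr rfl fun T hT => ?_
      rw [hcard T hT, Finset.image_insert, pow_succ, mul_comm, mul_smul, neg_one_smul]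
    rw [h2, ih, ih (fun S => g (insert (f a) S))]
    by_cases hfa : f a ∈ A.image f
    · rw [Finset.image_insert, Finset.insert_eq_self.mpr hfa,
        pair_sum (g := g) _ _ hfa, neg_zero, add_zero]
    · rw [Finset.image_insert, Finset.sum_powerset_insert hfa]
      have : ∑ S ∈ (A.image f).powerset, (-1 : ℤ) ^ (insert (f a) S).card • g (insert (f a) S)
          = - ∑ S ∈ (A.image f).powerset, (-1 : ℤ) ^ S.card • g (insert (f a) S) := by
        rw [← Finset.sum_neg_distrib]
        refine Finset.sum_congr rfl fun S hS => ?_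
        have : f a ∉ S := fun h => hfa (Finset.mem_powerset.mp hS h)
        rw [Finset.card_insert_of_notMem this, pow_succ, mul_comm, mul_smul, neg_one_smul]
      rw [this]

end Sums

section Cat

variable {A : Type u} [Category.{v} A] [Abelian A] [HasLimits A]

variable (G : PtdFin ⥤ A)

/-- the projection from the limit -/
noncomputable def Lpi (a : ℕ) : limit (iotaSurj ⋙ G) ⟶ G.obj ⟨a + 1⟩ :=
  limit.π (iotaSurj ⋙ G) ⟨a⟩

/-- the reduced projection -/
noncomputable def Lz (a : ℕ) : limit (iotaSurj ⋙ G) ⟶ G.obj ⟨a + 1⟩ :=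
  Lpi G a ≫ (𝟙 _ - G.map (allNone (a + 1) (a + 1)))

lemma pi_compat {a b : ℕ} (q : Fin (a + 1) → Fin (b + 1)) (hq : Function.Surjective q) :
    Lpi G a ≫ G.map (ihat q) = Lpi G b := by
  have := limit.w (iotaSurj ⋙ G) (show (⟨a⟩ : SurjFin) ⟶ ⟨b⟩ from ⟨q, hq⟩)
  exact this

lemma z_compat {a b : ℕ} (q : Fin (a + 1) → Fin (b + 1)) (hq : Function.Surjective q) :
    Lz G a ≫ G.map (ihat q) = Lz G b := by
  unfold Lz
  rw [Category.assoc, Preadditive.sub_comp, Category.id_comp, ← G.map_comp]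
  have h1 : allNone (a+1) (a+1) ≫ ihat q = ihat q ≫ allNone (b+1) (b+1) := rfl
  rw [h1, G.map_comp, Preadditive.comp_sub, Preadditive.comp_sub,
    pi_compat G q hq, Category.comp_id, ← Category.assoc, pi_compat G q hq]

lemma z_none {a b : ℕ} : Lz G a ≫ G.map (allNone (a + 1) (b + 1)) = 0 := by
  unfold Lz
  rw [Category.assoc, Preadditive.sub_comp, Category.id_comp, ← G.map_comp]
  have h1 : allNone (a+1) (a+1) ≫ allNone (a+1) (b+1) = allNone (a+1) (b+1) := rfl
  rw [h1, sub_self, Limits.comp_zero]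

lemma eT_erase_psi {m : ℕ} (T : Finset (Fin (m + 1))) (i : Fin (m + 1)) :
    eT (T.erase i) ≫ psiDel i = eT T ≫ psiDel i := by
  funext j
  show (eT (T.erase i) j).bind (psiDel i) = (eT T j).bind (psiDel i)
  by_cases hj : j = i
  · subst hj
    by_cases hT : j ∈ T
    · simp [eT, hT, Finset.notMem_erase, psiDel, finSuccEquiv'_at]
    · simp [eT, hT, Finset.notMem_erase]
  · by_cases hT : j ∈ T
    · simp [eT, hT, Finset.mem_erase, hj]
    · simp [eT, hT, Finset.mem_erase, hj]

lemma Phi (n : ℕ) (hG : IsPolyDegLE n G) (m : ℕ) (hm : n < m + 1) :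
    ∑ T ∈ (Finset.univ : Finset (Fin (m + 1))).powerset,
      (-1 : ℤ) ^ T.card • G.map (eT T) = 0 := by
  have hcomp : ∀ i : Fin (m + 1),
      (∑ T ∈ (Finset.univ : Finset (Fin (m + 1))).powerset,
        (-1 : ℤ) ^ T.card • G.map (eT T)) ≫ G.map (psiDel i) = 0 := by
    intro i
    rw [Preadditive.sum_comp]
    simp only [Preadditive.zsmul_comp, ← G.map_comp]
    rw [show (Finset.univ : Finset (Fin (m + 1))) = insert i (Finset.univ.erase i) from
        (Finset.insert_erase (Finset.mem_univ i)).symm,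
      Finset.sum_powerset_insert (Finset.notMem_erase i _), ← Finset.sum_add_distrib]
    refine Finset.sum_eq_zero fun T hT => ?_
    have hiT : i ∉ T := fun h => Finset.notMem_erase i _ (Finset.mem_powerset.mp hT h)
    have h1 : eT (insert i T) ≫ psiDel i = eT T ≫ psiDel i := by
      conv_rhs => rw [← Finset.erase_insert hiT]
      exact (eT_erase_psi (insert i T) i).symm
    rw [h1, Finset.card_insert_of_notMem hiT, pow_succ, mul_comm, mul_smul, neg_one_smul]
    exact add_neg_cancel _
  have hfac := (Subobject.finset_inf_factors _).mpr
      (fun i (_ : i ∈ Finset.univ) => kernelSubobject_factors _ _ (hcomp i))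
  rw [hG m hm] at hfac
  exact (Subobject.bot_factors_iff_zero _).mp hfac

lemma compress {a m : ℕ} (g : (⟨a + 1⟩ : PtdFin) ⟶ (⟨m + 1⟩ : PtdFin)) (j0 : Fin (a + 1))
    (hj : g j0 = none) :
    Lz G a ≫ G.map g = Lz G (img g).card ≫ G.map (gS (img g)) := by
  set S := img g with hSdef
  have hmemS : ∀ s, s ∈ S ↔ ∃ j, g j = some s := fun s => mem_img g s
  set σ := S.orderIsoOfFin rfl with hσ
  set idx : Fin (m + 1) → Fin (S.card + 1) :=
    fun s => if hs : s ∈ S then (σ.symm ⟨s, hs⟩).castSucc else Fin.last _ with hidx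
  set q : Fin (a + 1) → Fin (S.card + 1) :=
    fun i => (g i).elim (Fin.last _) idx with hq
  have hqsurj : Function.Surjective q := by
    intro y
    induction y using Fin.lastCases with
    | last => exact ⟨j0, by simp [hq, hj]⟩
    | cast x =>
      obtain ⟨j, hjx⟩ := (hmemS _).mp (σ x).2
      refine ⟨j, ?_⟩
      simp [hq, hjx, hidx, (σ x).2, Subtype.coe_eta]
  have hfact : ihat q ≫ gS S = g := by
    funext i
    show (some (q i)).bind (gS S) = g i
    cases hgi : g i with
    | none =>
      have hqi : q i = Fin.last _ := by simp [hq, hgi]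
      simp [hqi, gS]
    | some s =>
      have hs : s ∈ S := (hmemS s).mpr ⟨i, hgi⟩
      have hqi : q i = (σ.symm ⟨s, hs⟩).castSucc := by simp [hq, hgi, hidx, hs]
      have hlt : (((σ.symm ⟨s, hs⟩).castSucc : Fin (S.card + 1)) : ℕ) < S.card :=
        (σ.symm ⟨s, hs⟩).2
      simp only [hqi, Option.bind_some, gS, hlt, dif_pos]
      congr 1
      have : (⟨(((σ.symm ⟨s, hs⟩).castSucc : Fin (S.card + 1)) : ℕ), hlt⟩ : Fin S.card)
          = σ.symm ⟨s, hs⟩ := by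
        apply Fin.ext
        simp
      rw [this]
      exact congrArg Subtype.val (σ.apply_symm_apply ⟨s, hs⟩)
  have h2 : Lz G a ≫ G.map g = Lz G a ≫ G.map (ihat q) ≫ G.map (gS S) := by
    rw [← G.map_comp, hfact]
  rw [h2, ← Category.assoc, z_compat G q hqsurj]

/-- the canonical partial surjection collapsing the last point -/
def hmap (k : ℕ) : (⟨k + 2⟩ : PtdFin) ⟶ (⟨k + 1⟩ : PtdFin) :=
  fun i => if h : (i : ℕ) < k + 1 then some ⟨(i : ℕ), h⟩ else none

lemma v_zero (n : ℕ) (hG : IsPolyDegLE n G) (m : ℕ) :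
    ∀ S : Finset (Fin (m + 1)), Lz G S.card ≫ G.map (gS S) = 0 := by
  intro S
  induction S using Finset.strongInduction with
  | _ S ih =>
  rcases S.eq_empty_or_nonempty with hS | hS
  · subst hS
    have hg : gS (∅ : Finset (Fin (m + 1))) = allNone (0 + 1) (m + 1) := by
      funext i
      simp [gS, allNone]
    rw [hg]
    exact z_none G
  · set k := max n m with hk
    have hcard : S.card ≤ m + 1 := by
      have := Finset.card_le_univ S
      simpa using this
    have h0 : 0 < S.card := Finset.card_pos.mpr hS
    set σ := S.orderIsoOfFin rfl with hσ
    set p : Fin (k + 1) → Fin (m + 1) :=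
      fun i => if h : (i : ℕ) < S.card then ((σ ⟨(i : ℕ), h⟩ : {x // x ∈ S}) : Fin (m + 1))
        else ((σ ⟨0, h0⟩ : {x // x ∈ S}) : Fin (m + 1)) with hp
    have himg : Finset.univ.image p = S := by
      apply Finset.Subset.antisymm
      · intro t ht
        obtain ⟨i, _, rfl⟩ := Finset.mem_image.mp ht
        by_cases h : (i : ℕ) < S.card <;> simp [hp, h, Finset.coe_mem]
      · intro t ht
        have hlt : ((σ.symm ⟨t, ht⟩ : Fin S.card) : ℕ) < k + 1 := by
          have h1 : ((σ.symm ⟨t, ht⟩ : Fin S.card) : ℕ) < S.card := (σ.symm ⟨t, ht⟩).2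
          omega
        refine Finset.mem_image.mpr ⟨⟨((σ.symm ⟨t, ht⟩ : Fin S.card) : ℕ), hlt⟩,
          Finset.mem_univ _, ?_⟩
        simp only [hp, (σ.symm ⟨t, ht⟩).2, dif_pos]
        have : (⟨((σ.symm ⟨t, ht⟩ : Fin S.card) : ℕ), (σ.symm ⟨t, ht⟩).2⟩ : Fin S.card)
            = σ.symm ⟨t, ht⟩ := by apply Fin.ext; rfl
        rw [this]
        simp
    have hrel : ∑ T ∈ (Finset.univ : Finset (Fin (k + 1))).powerset,
        (-1 : ℤ) ^ T.card • (Lz G (T.image p).card ≫ G.map (gS (T.image p))) = 0 := by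
      have hterm : ∀ T ∈ (Finset.univ : Finset (Fin (k + 1))).powerset,
          Lz G (T.image p).card ≫ G.map (gS (T.image p))
            = Lz G (k + 1) ≫ G.map (hmap k ≫ eT T ≫ ihat p) := by
        intro T _
        have hnone : (hmap k ≫ eT T ≫ ihat p) (Fin.last (k + 1)) = none := by
          show ((hmap k) (Fin.last (k + 1))).bind _ = none
          simp [hmap]
        have hcpr := compress G (hmap k ≫ eT T ≫ ihat p) (Fin.last (k + 1)) hnone
        have himg2 : img (hmap k ≫ eT T ≫ ihat p) = T.image p := by
          ext s
          rw [mem_img]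
          constructor
          · rintro ⟨j, hjs⟩
            have hjs' : ((hmap k j).bind fun i' => (eT T i').bind (ihat p)) = some s := hjs
            by_cases h : (j : ℕ) < k + 1
            · simp only [hmap, h, dif_pos, Option.bind_some] at hjs'
              by_cases hT : (⟨(j : ℕ), h⟩ : Fin (k + 1)) ∈ T
              · simp only [eT, hT, if_pos, Option.bind_some, ihat, Option.some_inj] at hjs'
                exact Finset.mem_image.mpr ⟨_, hT, hjs'⟩
              · simp [eT, hT] at hjs'
            · simp [hmap, h] at hjs'
          · intro hs
            obtain ⟨i, hiT, rfl⟩ := Finset.mem_image.mp hs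
            refine ⟨i.castSucc, ?_⟩
            show ((hmap k i.castSucc).bind fun i' => (eT T i').bind (ihat p)) = some (p i)
            have hlt : ((i.castSucc : Fin (k + 2)) : ℕ) < k + 1 := i.2
            simp only [hmap, hlt, dif_pos, Option.bind_some]
            have : (⟨((i.castSucc : Fin (k + 2)) : ℕ), hlt⟩ : Fin (k + 1)) = i := by
              apply Fin.ext; rfl
            rw [this]
            simp [eT, hiT, ihat]
        rw [himg2] at hcpr
        exact hcpr.symm
      rw [Finset.sum_congr rfl (fun T hT =>
        congrArg (fun y => (-1 : ℤ) ^ T.card • y) (hterm T hT))]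
      have hexp : ∑ T ∈ (Finset.univ : Finset (Fin (k + 1))).powerset,
          (-1 : ℤ) ^ T.card • (Lz G (k + 1) ≫ G.map (hmap k ≫ eT T ≫ ihat p))
          = Lz G (k + 1) ≫ G.map (hmap k) ≫
            (∑ T ∈ (Finset.univ : Finset (Fin (k + 1))).powerset,
              (-1 : ℤ) ^ T.card • G.map (eT T)) ≫ G.map (ihat p) := by
        rw [Preadditive.sum_comp, Preadditive.comp_sum, Preadditive.comp_sum]
        refine Finset.sum_congr rfl fun T _ => ?_
        simp only [Preadditive.zsmul_comp, Preadditive.comp_zsmul, G.map_comp, Category.assoc]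
      rw [hexp, Phi G n hG k (by omega)]
      simp
    rw [sum_image_powerset p (fun S' => Lz G S'.card ≫ G.map (gS S')) Finset.univ, himg]
      at hrel
    rw [Finset.sum_eq_single S (fun S' hS' hne => by
        rw [ih S' (Finset.ssubset_iff_subset_ne.mpr ⟨Finset.mem_powerset.mp hS', hne⟩),
          smul_zero])
      (fun h => absurd (Finset.mem_powerset_self S) h)] at hrel
    have h2 := congrArg (fun x => (-1 : ℤ) ^ S.card • x) hrel
    simpa [smul_smul, ← pow_add, Even.neg_one_pow (⟨S.card, rfl⟩ : Even (S.card + S.card))]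
      using h2

lemma z_zero (n : ℕ) (hG : IsPolyDegLE n G) (m : ℕ) : Lz G m = 0 := by
  set k := max n m with hk
  set p : Fin (k + 1) → Fin (m + 1) :=
    fun i => if h : (i : ℕ) < m + 1 then ⟨(i : ℕ), h⟩ else ⟨0, Nat.succ_pos m⟩ with hp
  have hpsurj : Function.Surjective p := by
    intro y
    have hy : (y : ℕ) < k + 1 := lt_of_lt_of_le y.2 (by omega)
    refine ⟨⟨(y : ℕ), hy⟩, ?_⟩
    simp only [hp, y.2, dif_pos]
  have h0 : Lz G k ≫ (∑ T ∈ (Finset.univ : Finset (Fin (k + 1))).powerset,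
      (-1 : ℤ) ^ T.card • G.map (eT T)) ≫ G.map (ihat p) = 0 := by
    rw [Phi G n hG k (by omega), Limits.zero_comp, Limits.comp_zero]
  have hexp : Lz G k ≫ (∑ T ∈ (Finset.univ : Finset (Fin (k + 1))).powerset,
      (-1 : ℤ) ^ T.card • G.map (eT T)) ≫ G.map (ihat p)
      = ∑ T ∈ (Finset.univ : Finset (Fin (k + 1))).powerset,
        (-1 : ℤ) ^ T.card • (Lz G k ≫ G.map (eT T ≫ ihat p)) := by
    rw [Preadditive.sum_comp, Preadditive.comp_sum]
    refine Finset.sum_congr rfl fun T _ => ?_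
    simp only [Preadditive.zsmul_comp, Preadditive.comp_zsmul, G.map_comp, Category.assoc]
  rw [hexp] at h0
  rw [Finset.sum_eq_single Finset.univ (fun T hT hne => by
      obtain ⟨j, hj⟩ : ∃ j, j ∉ T := by
        by_contra hc
        push_neg at hc
        exact hne (Finset.eq_univ_iff_forall.mpr hc)
      have hnone : (eT T ≫ ihat p) j = none := by
        show (eT T j).bind (ihat p) = none
        simp [eT, hj]
      rw [compress G (eT T ≫ ihat p) j hnone, v_zero G n hG m _, smul_zero])
    (fun h => absurd (Finset.mem_powerset_self _) h)] at h0
  rw [eT_univ, Category.id_comp, z_compat G p hpsurj] at h0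
  have h2 := congrArg (fun x => (-1 : ℤ) ^ (Finset.univ : Finset (Fin (k + 1))).card • x) h0
  simpa [smul_smul, ← pow_add,
    Even.neg_one_pow (⟨(Finset.univ : Finset (Fin (k + 1))).card, rfl⟩ :
      Even ((Finset.univ : Finset (Fin (k + 1))).card + (Finset.univ : Finset (Fin (k + 1))).card))]
    using h2

/-- the unique pointed map out of the zero object -/
def uMap (b : ℕ) : (⟨0⟩ : PtdFin) ⟶ (⟨b⟩ : PtdFin) := fun i => i.elim0

/-- the constant cone on `G(⟨0⟩)` -/
noncomputable def constCone : Cone (iotaSurj ⋙ G) where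
  pt := G.obj ⟨0⟩
  π :=
    { app := fun X => G.map (uMap (X.n + 1))
      naturality := fun X Y f => by
        dsimp
        erw [Category.id_comp, ← G.map_comp]
        congr 1
        funext i
        exact i.elim0 }

end Cat

end PolyAux

open PolyAux

/-- For a complete abelian category `A` and a polynomial functor `G : FinSet* → A` of
degree `≤ n`, the natural map `lim_{I ∈ FinSetSurj_ne} G({*} ⊔ I) → G({*})` (induced by
the natural transformation to the constant functor at the terminal pointed set `{*}`)
is an isomorphism. -/
theorem limit_of_polynomial_functor_is_trivial
    {A : Type u} [Category.{v} A] [Abelian A] [HasLimits A]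
    (n : ℕ) (G : PtdFin ⥤ A) (hG : IsPolyDegLE n G) :
    IsIso (limit.π (iotaSurj ⋙ G) ⟨0⟩ ≫
      G.map (show (⟨1⟩ : PtdFin) ⟶ ⟨0⟩ from fun _ => none)) := by
  show IsIso (limit.π (iotaSurj ⋙ G) ⟨0⟩ ≫ G.map (allNone 1 0))
  have hmain : ∀ j : SurjFin,
      limit.π (iotaSurj ⋙ G) ⟨0⟩ ≫ G.map (allNone 1 0) ≫ G.map (uMap (j.n + 1))
        = limit.π (iotaSurj ⋙ G) j := by
    intro j
    have hz := z_zero G n hG j.n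
    unfold Lz at hz
    rw [Preadditive.comp_sub, Category.comp_id, sub_eq_zero] at hz
    -- hz : Lpi G j.n = Lpi G j.n ≫ G.map (allNone _ _)
    have hdec : allNone (j.n + 1) (j.n + 1)
        = ihat (fun _ : Fin (j.n + 1) => (0 : Fin 1)) ≫ (allNone 1 0 ≫ uMap (j.n + 1)) := rfl
    have hfold : Lpi G j.n ≫ G.map (ihat (fun _ : Fin (j.n + 1) => (0 : Fin 1))) = Lpi G 0 :=
      pi_compat G _ (fun y => ⟨0, (Fin.fin_one_eq_zero y).symm⟩)
    have : limit.π (iotaSurj ⋙ G) j = Lpi G j.n := rfl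
    rw [this, hz, hdec, G.map_comp, G.map_comp, ← Category.assoc, ← Category.assoc, hfold,
      Category.assoc]
    rfl
  refine ⟨limit.lift (iotaSurj ⋙ G) (constCone G), ?_, ?_⟩
  · apply limit.hom_ext
    intro j
    erw [Category.assoc, Category.assoc, limit.lift_π, Category.id_comp]
    exact hmain j
  · erw [← Category.assoc, limit.lift_π]
    show G.map (uMap 1) ≫ G.map (allNone 1 0) = 𝟙 _
    rw [← G.map_comp]
    have : uMap 1 ≫ allNone 1 0 = 𝟙 (⟨0⟩ : PtdFin) := by
      funext i
      exact i.elim0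
    rw [this, G.map_id]
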